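/- Let M > 0, Λ ∈ ℝ, ℓ ≥ 2 an integer, and let I ⊆ (0, ∞) be an open interval on which f > 0 and μr + 6M > 0. Set Z(r) = (2MΛr³ + μr(r − 3M) − 6M²)/(r²(μr + 6M)). Then χ₀(r) = √(f(r))/(μr + 6M) satisfies f(r)·χ₀'(r) + Z(r)·χ₀(r) = 0 on I, and every differentiable function χ : I → ℝ satisfying f·χ' + Z·χ = 0 on I is a constant multiple of χ₀. -/

import Mathlib

/-- The kernel of the operator `f∂_r + Z` appearing in the gauge-invariant
scalar `G₊` is one dimensional, spanned by `χ₀ = √f/(μr + 6M)`: `χ₀` solves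
`f χ₀' + Z χ₀ = 0`, and every differentiable solution on the interval is a
constant multiple of `χ₀`. -/
theorem stmt_16 (M Λ : ℝ) (hM : 0 < M) (ℓ : ℕ) (hℓ : 2 ≤ ℓ) (a b : ℝ)
    (hI : Set.Ioo a b ⊆ Set.Ioi (0 : ℝ)) :
    let μ : ℝ := ((ℓ : ℝ) - 1) * ((ℓ : ℝ) + 2)
    let f : ℝ → ℝ := fun r => 1 - 2 * M / r - Λ * r ^ 2 / 3
    let Z : ℝ → ℝ := fun r =>
      (2 * M * Λ * r ^ 3 + μ * r * (r - 3 * M) - 6 * M ^ 2)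
        / (r ^ 2 * (μ * r + 6 * M))
    let χ₀ : ℝ → ℝ := fun r => Real.sqrt (f r) / (μ * r + 6 * M)
    (∀ r ∈ Set.Ioo a b, 0 < f r) →
    (∀ r ∈ Set.Ioo a b, 0 < μ * r + 6 * M) →
    (∀ r ∈ Set.Ioo a b, ∃ d : ℝ,
      HasDerivAt χ₀ d r ∧ f r * d + Z r * χ₀ r = 0) ∧
    (∀ χ : ℝ → ℝ,
      (∀ r ∈ Set.Ioo a b, ∃ d : ℝ,
        HasDerivAt χ d r ∧ f r * d + Z r * χ r = 0) →
      ∃ c : ℝ, ∀ r ∈ Set.Ioo a b, χ r = c * χ₀ r) := by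
  intro μ f Z χ₀ hf hden
  have h1 : ∀ r ∈ Set.Ioo a b, ∃ d : ℝ,
      HasDerivAt χ₀ d r ∧ f r * d + Z r * χ₀ r = 0 := by
    intro r hr
    have hr0 : (0 : ℝ) < r := hI hr
    have hfr : 0 < f r := hf r hr
    have hdn : 0 < μ * r + 6 * M := hden r hr
    have hs : 0 < Real.sqrt (f r) := Real.sqrt_pos.mpr hfr
    have hs2 : Real.sqrt (f r) ^ 2 = f r := Real.sq_sqrt hfr.le
    -- derivative of f
    have hfd : HasDerivAt f (2 * M / r ^ 2 - 2 * Λ * r / 3) r := by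
      have h1 : HasDerivAt (fun r : ℝ => 2 * M / r)
          ((0 * r - 2 * M * 1) / r ^ 2) r :=
        (hasDerivAt_const r (2 * M)).div (hasDerivAt_id r) hr0.ne'
      have h2 : HasDerivAt (fun r : ℝ => Λ * r ^ 2 / 3)
          ((Λ * (2 * r ^ 1)) / 3) r :=
        ((hasDerivAt_pow 2 r).const_mul Λ).div_const 3
      have := ((hasDerivAt_const r (1 : ℝ)).sub h1).sub h2
      exact this.congr_deriv (by ring)
    have hsd : HasDerivAt (fun x => Real.sqrt (f x))
        ((2 * M / r ^ 2 - 2 * Λ * r / 3) / (2 * Real.sqrt (f r))) r :=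
      hfd.sqrt hfr.ne'
    have hdend : HasDerivAt (fun x : ℝ => μ * x + 6 * M) μ r := by
      simpa using ((hasDerivAt_id r).const_mul μ).add_const (6 * M)
    have hχ₀ : HasDerivAt χ₀
        (((2 * M / r ^ 2 - 2 * Λ * r / 3) / (2 * Real.sqrt (f r)) *
            (μ * r + 6 * M) - Real.sqrt (f r) * μ) / (μ * r + 6 * M) ^ 2) r :=
      hsd.div hdend hdn.ne'
    refine ⟨_, hχ₀, ?_⟩
    set s := Real.sqrt (f r) with hsdef
    have key : s ^ 2 * (((2 * M / r ^ 2 - 2 * Λ * r / 3) / (2 * s)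
          * (μ * r + 6 * M) - s * μ) / (μ * r + 6 * M) ^ 2)
        + (2 * M * Λ * r ^ 3 + μ * r * (r - 3 * M) - 6 * M ^ 2)
          / (r ^ 2 * (μ * r + 6 * M)) * (s / (μ * r + 6 * M))
        = s / (μ * r + 6 * M) * ((2 * M / r ^ 2 - 2 * Λ * r / 3) / 2
          - s ^ 2 * μ / (μ * r + 6 * M)
          + (2 * M * Λ * r ^ 3 + μ * r * (r - 3 * M) - 6 * M ^ 2)
            / (r ^ 2 * (μ * r + 6 * M))) := by
      have hdn' : r * μ + M * 6 ≠ 0 := by linarith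
      field_simp
    have hB : (2 * M / r ^ 2 - 2 * Λ * r / 3) / 2
          - s ^ 2 * μ / (μ * r + 6 * M)
          + (2 * M * Λ * r ^ 3 + μ * r * (r - 3 * M) - 6 * M ^ 2)
            / (r ^ 2 * (μ * r + 6 * M)) = 0 := by
      rw [hs2]
      show (2 * M / r ^ 2 - 2 * Λ * r / 3) / 2
          - (1 - 2 * M / r - Λ * r ^ 2 / 3) * μ / (μ * r + 6 * M)
          + (2 * M * Λ * r ^ 3 + μ * r * (r - 3 * M) - 6 * M ^ 2)
            / (r ^ 2 * (μ * r + 6 * M)) = 0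
      have hdn' : r * μ + M * 6 ≠ 0 := by linarith
      field_simp
      ring
    show f r * (((2 * M / r ^ 2 - 2 * Λ * r / 3) / (2 * s) * (μ * r + 6 * M)
        - s * μ) / (μ * r + 6 * M) ^ 2)
      + (2 * M * Λ * r ^ 3 + μ * r * (r - 3 * M) - 6 * M ^ 2)
        / (r ^ 2 * (μ * r + 6 * M)) * (s / (μ * r + 6 * M)) = 0
    rw [show f r = s ^ 2 from hs2.symm, key, hB, mul_zero]
  refine ⟨h1, ?_⟩
  intro χ hχ
  by_cases hab : a < b
  swap
  · exact ⟨0, fun r hr => absurd hr (by simp [Set.Ioo_eq_empty (fun h => hab h)])⟩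
  set r₀ := (a + b) / 2 with hr₀def
  have hr₀ : r₀ ∈ Set.Ioo a b := ⟨by linarith, by linarith⟩
  have hχ₀ne : ∀ r ∈ Set.Ioo a b, χ₀ r ≠ 0 := by
    intro r hr
    have := Real.sqrt_pos.mpr (hf r hr)
    exact (div_pos this (hden r hr)).ne'
  set g : ℝ → ℝ := fun r => χ r / χ₀ r with hg
  have hgd : ∀ r ∈ Set.Ioo a b, HasDerivAt g 0 r := by
    intro r hr
    obtain ⟨d₀, hd₀, he₀⟩ := h1 r hr
    obtain ⟨d, hd, he⟩ := hχ r hr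
    have hne := hχ₀ne r hr
    have hfr := hf r hr
    have key : d * χ₀ r - χ r * d₀ = 0 := by
      have : f r * (d * χ₀ r - χ r * d₀) = 0 := by
        linear_combination χ₀ r * he - χ r * he₀
      have := mul_eq_zero.mp this
      rcases this with h | h
      · exact absurd h hfr.ne'
      · exact h
    have := hd.div hd₀ hne
    rw [key] at this
    exact (by simpa using this : HasDerivAt (χ / χ₀) 0 r)
  have hconst : ∀ r ∈ Set.Ioo a b, g r = g r₀ := by
    intro r hr
    have hconv : Convex ℝ (Set.Ioo a b) := convex_Ioo a b
    refine hconv.is_const_of_fderivWithin_eq_zero (𝕜 := ℝ)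
      (fun x hx => ((hgd x hx).differentiableAt).differentiableWithinAt) ?_ hr hr₀
    intro x hx
    rw [fderivWithin_of_isOpen isOpen_Ioo hx]
    exact ((hgd x hx).hasFDerivAt.fderiv).trans (by ext; simp)
  refine ⟨g r₀, fun r hr => ?_⟩
  have hne := hχ₀ne r hr
  have := hconst r hr
  simp only [hg] at this
  rw [div_eq_iff hne, div_mul_eq_mul_div] at this
  rw [this]
  show χ r₀ * χ₀ r / χ₀ r₀ = χ r₀ / χ₀ r₀ * χ₀ r
  ring
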